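/- (Dominated Convergence Theorem for the Riemann integral.) Let f_n : ℝ → ℝ (n ∈ ℕ) each be Riemann integrable on [0,1] with Riemann integral y_n, let g : ℝ → ℝ be Riemann integrable on [0,1] with |f_n(x)| ≤ g(x) for every x ∈ [0,1] and every n, suppose f_n(x) → f(x) for every x ∈ [0,1], and assume f is Riemann integrable on [0,1] with Riemann integral y. Then y_n → y. -/

import Mathlib

open MeasureTheory Filter Topology BoxIntegral

noncomputable def unitBox : BoxIntegral.Box (Fin 1) :=
  ⟨fun _ => 0, fun _ => 1, fun _ => one_pos⟩

/-- `f : ℝ → ℝ` has Riemann integral `y` on `[0,1]`, in the sense of Mathlib's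
box-integral theory with the Riemann integration parameters. -/
def HasRiemannIntegralOn01 (f : ℝ → ℝ) (y : ℝ) : Prop :=
  BoxIntegral.HasIntegral unitBox BoxIntegral.IntegrationParams.Riemann
    (fun x => f (x 0)) (volume : Measure (Fin 1 → ℝ)).toBoxAdditive.toSMul y

/-- `f : ℝ → ℝ` is Riemann integrable on `[0,1]`. -/
def RiemannIntegrableOn01 (f : ℝ → ℝ) : Prop :=
  BoxIntegral.Integrable unitBox BoxIntegral.IntegrationParams.Riemann
    (fun x => f (x 0)) (volume : Measure (Fin 1 → ℝ)).toBoxAdditive.toSMul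

section RiemannDCTAux

open MeasureTheory Filter Topology BoxIntegral Set Metric

namespace RiemannDCT

variable {ι : Type} [Fintype ι] {I : BoxIntegral.Box ι} {f : (ι → ℝ) → ℝ} {y : ℝ}


lemma sum_close (hf : BoxIntegral.HasIntegral I IntegrationParams.Riemann f (volume : Measure (ι → ℝ)).toBoxAdditive.toSMul y)
    {ε : ℝ} (hε : 0 < ε) :
    ∃ π : TaggedPrepartition I, π.IsPartition ∧
      ∀ t : BoxIntegral.Box ι → (ι → ℝ), (∀ J ∈ π.boxes, t J ∈ BoxIntegral.Box.Icc J) →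
        |(∑ J ∈ π.boxes, (volume (J : Set (ι → ℝ))).toReal • f (t J)) - y| ≤ ε := by
  rcases BoxIntegral.hasIntegral_iff.1 hf ε hε with ⟨r, hrc, H⟩
  have hrconst : ∀ x, r 0 x = r 0 0 := hrc 0 (by rfl)
  set ρ : ℝ := (r 0 0 : ℝ) with hρ
  have hρ0 : 0 < ρ := (r 0 0).2
  obtain ⟨π₀, hP, hHen, hsub, -, -⟩ :=
    BoxIntegral.Box.exists_taggedPartition_isHenstock_isSubordinate_homothetic I
      (fun _ => ⟨ρ / 2, by simpa using half_pos hρ0⟩)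
  refine ⟨π₀, hP, fun t ht => ?_⟩
  classical
  set π : TaggedPrepartition I :=
    { toPrepartition := π₀.toPrepartition
      tag := fun J => if h : J ∈ π₀.boxes then t J else π₀.tag J
      tag_mem_Icc := fun J => by
        by_cases h : J ∈ π₀.boxes
        · simp only [h, dif_pos]
          exact BoxIntegral.Box.le_iff_Icc.1 (π₀.toPrepartition.le_of_mem h) (ht J h)
        · simp only [h, dif_neg, not_false_iff]
          exact π₀.tag_mem_Icc J } with hπdef
  have htag : ∀ J ∈ π₀.boxes, π.tag J = t J := fun J hJ => dif_pos hJ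
  have hmem : IntegrationParams.Riemann.MemBaseSet I 0 (r 0) π := by
    refine ⟨?_, ?_, ?_, ?_⟩
    · intro J hJ x hx
      have hJ' : J ∈ π₀.boxes := hJ
      rw [htag J hJ', mem_closedBall, hrconst (t J), ← hρ]
      have h1 : dist x (π₀.tag J) ≤ ρ / 2 := hsub J hJ' hx
      have h2 : dist (t J) (π₀.tag J) ≤ ρ / 2 := hsub J hJ' (ht J hJ')
      calc dist x (t J) ≤ dist x (π₀.tag J) + dist (π₀.tag J) (t J) := dist_triangle _ _ _
        _ ≤ ρ / 2 + ρ / 2 := add_le_add h1 (dist_comm (t J) (π₀.tag J) ▸ h2)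
        _ = ρ := by ring
    · intro _ J hJ
      have hJ' : J ∈ π₀.boxes := hJ
      rw [htag J hJ']
      exact ht J hJ'
    · intro h; exact absurd h (by decide)
    · intro h; exact absurd h (by decide)
  have hPπ : π.IsPartition := hP
  have := H 0 π hmem hPπ
  rw [Real.dist_eq] at this
  calc |(∑ J ∈ π₀.boxes, (volume (J : Set (ι → ℝ))).toReal • f (t J)) - y|
      = |BoxIntegral.integralSum f (volume : Measure (ι → ℝ)).toBoxAdditive.toSMul π - y| := by
        congr 1
        rw [BoxIntegral.integralSum]
        refine congrArg (· - y) ?_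
        refine (Finset.sum_congr rfl fun J hJ => ?_).symm
        rw [htag J hJ]; rfl
    _ ≤ ε := this


lemma exists_bound (hf : BoxIntegral.HasIntegral I IntegrationParams.Riemann f
      (volume : Measure (ι → ℝ)).toBoxAdditive.toSMul y) :
    ∃ C : ℝ, 0 ≤ C ∧ ∀ x ∈ (I : Set (ι → ℝ)), |f x| ≤ C := by
  classical
  obtain ⟨π, hP, Hsum⟩ := sum_close hf one_pos
  have hcover : ∀ x ∈ (I : Set (ι → ℝ)), ∃ J ∈ π.boxes, x ∈ (J : Set (ι → ℝ)) := by
    intro x hx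
    have hx' : x ∈ π.toPrepartition.iUnion := hP.iUnion_eq.symm ▸ hx
    exact π.toPrepartition.mem_iUnion.1 hx'
  obtain ⟨J₀, hJ₀, -⟩ := hcover I.upper I.upper_mem
  have hne : π.boxes.Nonempty := ⟨J₀, hJ₀⟩
  set C : ℝ := π.boxes.sup' hne fun J => |f J.upper| + 2 / (volume (J : Set (ι → ℝ))).toReal
    with hC
  have key : ∀ x ∈ (I : Set (ι → ℝ)), |f x| ≤ C := by
    intro x hx
    obtain ⟨J, hJ, hxJ⟩ := hcover x hx
    have hv : 0 < (volume (J : Set (ι → ℝ))).toReal := by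
      rw [BoxIntegral.Box.volume_apply']
      exact Finset.prod_pos fun i _ => sub_pos.2 (J.lower_lt_upper i)
    set t₁ : BoxIntegral.Box ι → (ι → ℝ) := fun K => K.upper with ht₁def
    set t₂ := Function.update t₁ J x with ht₂def
    have ht₁ : ∀ K ∈ π.boxes, t₁ K ∈ BoxIntegral.Box.Icc K := fun K _ => K.upper_mem_Icc
    have ht₂ : ∀ K ∈ π.boxes, t₂ K ∈ BoxIntegral.Box.Icc K := by
      intro K hK
      by_cases h : K = J
      · subst h
        rw [ht₂def, Function.update_self]
        exact BoxIntegral.Box.coe_subset_Icc hxJ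
      · rw [ht₂def, Function.update_of_ne h]
        exact K.upper_mem_Icc
    have h1 := Hsum t₁ ht₁
    have h2 := Hsum t₂ ht₂
    set S₁ := ∑ K ∈ π.boxes, (volume (K : Set (ι → ℝ))).toReal • f (t₁ K) with hS₁
    set S₂ := ∑ K ∈ π.boxes, (volume (K : Set (ι → ℝ))).toReal • f (t₂ K) with hS₂
    have hdiff : S₂ - S₁ = (volume (J : Set (ι → ℝ))).toReal * (f x - f J.upper) := by
      rw [hS₁, hS₂, ← Finset.sum_sub_distrib]
      rw [Finset.sum_eq_single_of_mem J hJ]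
      · rw [ht₂def, Function.update_self]
        simp [smul_eq_mul]
        ring
      · intro K hK hKJ
        rw [ht₂def, Function.update_of_ne hKJ, sub_self]
    have h3 : |S₂ - S₁| ≤ 2 := by
      calc |S₂ - S₁| = |(S₂ - y) - (S₁ - y)| := by ring_nf
        _ ≤ |S₂ - y| + |S₁ - y| := abs_sub _ _
        _ ≤ 1 + 1 := add_le_add h2 h1
        _ = 2 := by norm_num
    have h4 : |f x - f J.upper| ≤ 2 / (volume (J : Set (ι → ℝ))).toReal := by
      rw [le_div_iff₀ hv]
      calc |f x - f J.upper| * (volume (J : Set (ι → ℝ))).toReal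
          = |(volume (J : Set (ι → ℝ))).toReal * (f x - f J.upper)| := by
            rw [abs_mul, abs_of_pos hv]; ring
        _ = |S₂ - S₁| := by rw [hdiff]
        _ ≤ 2 := h3
    calc |f x| ≤ |f J.upper| + |f x - f J.upper| := by
          have := abs_add_le (f J.upper) (f x - f J.upper)
          simpa using this
      _ ≤ |f J.upper| + 2 / (volume (J : Set (ι → ℝ))).toReal := by linarith
      _ ≤ C := by rw [hC]; exact Finset.le_sup' (fun K : BoxIntegral.Box ι => |f K.upper| + 2 / (volume (K : Set (ι → ℝ))).toReal) hJ
  exact ⟨C, (abs_nonneg _).trans (key I.upper I.upper_mem), key⟩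


lemma approx_upper (hf : BoxIntegral.HasIntegral I IntegrationParams.Riemann f
      (volume : Measure (ι → ℝ)).toBoxAdditive.toSMul y)
    {C : ℝ} (hC : ∀ x ∈ (I : Set (ι → ℝ)), |f x| ≤ C) {ε : ℝ} (hε : 0 < ε) :
    ∃ u : (ι → ℝ) → ℝ, Measurable u ∧ (∀ x ∈ (I : Set (ι → ℝ)), f x ≤ u x) ∧
      (∀ x, x ∉ (I : Set (ι → ℝ)) → u x = 0) ∧ (∀ x, |u x| ≤ C) ∧
      MeasureTheory.Integrable u volume ∧ (∫ x, u x) ≤ y + ε := by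
  classical
  obtain ⟨π, hP, Hsum⟩ := sum_close hf hε
  have hC0 : 0 ≤ C := (abs_nonneg _).trans (hC I.upper I.upper_mem)
  set S : BoxIntegral.Box ι → ℝ := fun J => sSup (f '' (J : Set (ι → ℝ))) with hSdef
  have hJI : ∀ J ∈ π.boxes, (J : Set (ι → ℝ)) ⊆ (I : Set (ι → ℝ)) := fun J hJ =>
    BoxIntegral.Box.coe_subset_coe.2 (π.toPrepartition.le_of_mem hJ)
  have himg : ∀ J ∈ π.boxes, (f '' (J : Set (ι → ℝ))).Nonempty := fun J _ =>
    (J.nonempty_coe).image f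
  have hbdd : ∀ J ∈ π.boxes, BddAbove (f '' (J : Set (ι → ℝ))) := by
    intro J hJ
    refine ⟨C, ?_⟩
    rintro _ ⟨z, hz, rfl⟩
    exact (abs_le.1 (hC z (hJI J hJ hz))).2
  have hSC : ∀ J ∈ π.boxes, |S J| ≤ C := by
    intro J hJ
    rw [abs_le]
    constructor
    · calc -C ≤ f J.upper := (abs_le.1 (hC J.upper (hJI J hJ J.upper_mem))).1
        _ ≤ S J := le_csSup (hbdd J hJ) (Set.mem_image_of_mem f J.upper_mem)
    · refine csSup_le (himg J hJ) ?_
      rintro _ ⟨z, hz, rfl⟩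
      exact (abs_le.1 (hC z (hJI J hJ hz))).2
  set u : (ι → ℝ) → ℝ :=
    fun x => ∑ J ∈ π.boxes, Set.indicator (J : Set (ι → ℝ)) (fun _ => S J) x with hudef
  have hu_mem : ∀ x ∈ (I : Set (ι → ℝ)), ∃ J ∈ π.boxes, x ∈ (J : Set (ι → ℝ)) ∧ u x = S J := by
    intro x hx
    have hx' : x ∈ π.toPrepartition.iUnion := hP.iUnion_eq.symm ▸ hx
    obtain ⟨J, hJ, hxJ⟩ := π.toPrepartition.mem_iUnion.1 hx'
    refine ⟨J, hJ, hxJ, ?_⟩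
    simp only [hudef]
    rw [Finset.sum_eq_single_of_mem J hJ]
    · exact Set.indicator_of_mem hxJ _
    · intro K hK hKJ
      refine Set.indicator_of_notMem ?_ _
      intro hxK
      exact (Set.disjoint_left.1
        (π.toPrepartition.pairwiseDisjoint (Finset.mem_coe.2 hK) (Finset.mem_coe.2 hJ) hKJ))
        hxK hxJ
  have hu_out : ∀ x, x ∉ (I : Set (ι → ℝ)) → u x = 0 := by
    intro x hx
    rw [hudef]
    refine Finset.sum_eq_zero fun J hJ => Set.indicator_of_notMem (fun hxJ => hx (hJI J hJ hxJ)) _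
  have hu_ge : ∀ x ∈ (I : Set (ι → ℝ)), f x ≤ u x := by
    intro x hx
    obtain ⟨J, hJ, hxJ, hux⟩ := hu_mem x hx
    rw [hux]
    exact le_csSup (hbdd J hJ) (Set.mem_image_of_mem f hxJ)
  have hu_bd : ∀ x, |u x| ≤ C := by
    intro x
    by_cases hx : x ∈ (I : Set (ι → ℝ))
    · obtain ⟨J, hJ, -, hux⟩ := hu_mem x hx
      rw [hux]; exact hSC J hJ
    · rw [hu_out x hx]; simpa using hC0
  have hu_meas : Measurable u := by
    rw [hudef]
    exact Finset.measurable_sum _ fun J _ => measurable_const.indicator J.measurableSet_coe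
  have hu_int : MeasureTheory.Integrable u volume := by
    rw [hudef]
    refine MeasureTheory.integrable_finset_sum _ fun J _ => ?_
    rw [MeasureTheory.integrable_indicator_iff J.measurableSet_coe]
    exact MeasureTheory.integrableOn_const (J.measure_coe_lt_top volume).ne
  have hu_integral :
      (∫ x, u x) = ∑ J ∈ π.boxes, (volume (J : Set (ι → ℝ))).toReal • S J := by
    rw [hudef]
    rw [MeasureTheory.integral_finset_sum _ fun J _ => ?_]
    · exact Finset.sum_congr rfl fun J _ =>
        MeasureTheory.integral_indicator_const _ J.measurableSet_coe
    · rw [MeasureTheory.integrable_indicator_iff J.measurableSet_coe]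
      exact MeasureTheory.integrableOn_const (J.measure_coe_lt_top volume).ne
  set V : ℝ := (volume (I : Set (ι → ℝ))).toReal with hVdef
  have hV0 : 0 ≤ V := ENNReal.toReal_nonneg
  have hsumV : ∑ J ∈ π.boxes, (volume (J : Set (ι → ℝ))).toReal = V := by
    rw [hVdef, ← hP.iUnion_eq]
    exact (π.toPrepartition.measure_iUnion_toReal volume).symm
  have hkey : ∀ η : ℝ, 0 < η →
      (∑ J ∈ π.boxes, (volume (J : Set (ι → ℝ))).toReal • S J) ≤ y + ε + η * V := by
    intro η hη
    have hch : ∀ J ∈ π.boxes, ∃ z, z ∈ (J : Set (ι → ℝ)) ∧ S J - η < f z := by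
      intro J hJ
      obtain ⟨a, ⟨z, hz, rfl⟩, ha⟩ := exists_lt_of_lt_csSup (himg J hJ)
        (show S J - η < S J by linarith)
      exact ⟨z, hz, ha⟩
    set t : BoxIntegral.Box ι → (ι → ℝ) :=
      fun J => if h : J ∈ π.boxes then (hch J h).choose else J.upper with htdef
    have ht : ∀ J ∈ π.boxes, t J ∈ BoxIntegral.Box.Icc J := by
      intro J hJ
      rw [htdef]
      simp only [hJ, dif_pos]
      exact BoxIntegral.Box.coe_subset_Icc (hch J hJ).choose_spec.1
    have hlt : ∀ J ∈ π.boxes, S J ≤ f (t J) + η := by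
      intro J hJ
      have := (hch J hJ).choose_spec.2
      rw [htdef]
      simp only [hJ, dif_pos]
      linarith
    have h1 := Hsum t ht
    have h2 : (∑ J ∈ π.boxes, (volume (J : Set (ι → ℝ))).toReal • f (t J)) ≤ y + ε := by
      have := (abs_le.1 h1).2
      linarith
    calc (∑ J ∈ π.boxes, (volume (J : Set (ι → ℝ))).toReal • S J)
        ≤ ∑ J ∈ π.boxes, (volume (J : Set (ι → ℝ))).toReal • (f (t J) + η) := by
          refine Finset.sum_le_sum fun J hJ => ?_
          exact smul_le_smul_of_nonneg_left (hlt J hJ) ENNReal.toReal_nonneg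
      _ = (∑ J ∈ π.boxes, (volume (J : Set (ι → ℝ))).toReal • f (t J)) + η * V := by
          rw [← hsumV, Finset.mul_sum, ← Finset.sum_add_distrib]
          refine Finset.sum_congr rfl fun J _ => ?_
          simp only [smul_eq_mul]; ring
      _ ≤ y + ε + η * V := by linarith
  have hfinal : (∫ x, u x) ≤ y + ε := by
    rw [hu_integral]
    refine le_of_forall_pos_le_add fun η hη => ?_
    have h := hkey (η / (V + 1)) (by positivity)
    have : η / (V + 1) * V ≤ η := by
      rw [div_mul_eq_mul_div, div_le_iff₀ (by linarith)]
      nlinarith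
    linarith
  exact ⟨u, hu_meas, hu_ge, hu_out, hu_bd, hu_int, hfinal⟩


lemma key (hf : BoxIntegral.HasIntegral I IntegrationParams.Riemann f
      (volume : Measure (ι → ℝ)).toBoxAdditive.toSMul y) :
    MeasureTheory.IntegrableOn f (I : Set (ι → ℝ)) volume ∧
      (∫ x in (I : Set (ι → ℝ)), f x) = y := by
  classical
  obtain ⟨C, hC0, hC⟩ := exists_bound hf
  have hneg : BoxIntegral.HasIntegral I IntegrationParams.Riemann (-f)
      (volume : Measure (ι → ℝ)).toBoxAdditive.toSMul (-y) := hf.neg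
  have hCneg : ∀ x ∈ (I : Set (ι → ℝ)), |(-f) x| ≤ C := by
    intro x hx; simpa using hC x hx
  have hεpos : ∀ n : ℕ, (0:ℝ) < 1 / (n + 1) := fun n => by positivity
  choose uu hu_meas hu_ge hu_out hu_bd hu_int hu_le using
    fun n : ℕ => approx_upper hf hC (hεpos n)
  choose vv hv_meas hv_ge hv_out hv_bd hv_int hv_le using
    fun n : ℕ => approx_upper hneg hCneg (hεpos n)
  set ll : ℕ → (ι → ℝ) → ℝ := fun n x => -(vv n x) with hlldef
  have hl_meas : ∀ n, Measurable (ll n) := fun n => (hv_meas n).neg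
  have hl_le : ∀ n, ∀ x ∈ (I : Set (ι → ℝ)), ll n x ≤ f x := by
    intro n x hx
    have := hv_ge n x hx
    simp only [hlldef, Pi.neg_apply] at this ⊢
    linarith
  have hl_out : ∀ n x, x ∉ (I : Set (ι → ℝ)) → ll n x = 0 := by
    intro n x hx; simp [hlldef, hv_out n x hx]
  have hl_bd : ∀ n x, |ll n x| ≤ C := by intro n x; simpa [hlldef] using hv_bd n x
  have hl_int : ∀ n, MeasureTheory.Integrable (ll n) volume := fun n => (hv_int n).neg
  have hl_ge : ∀ n, y - 1 / (n + 1) ≤ ∫ x, ll n x := by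
    intro n
    have h1 : (∫ x, vv n x) ≤ -y + 1 / (n + 1) := hv_le n
    have h2 : (∫ x, ll n x) = -∫ x, vv n x := by
      simp only [hlldef]
      exact MeasureTheory.integral_neg _
    linarith
  set U : (ι → ℝ) → ℝ := fun x => ⨅ n, uu n x with hUdef
  set L : (ι → ℝ) → ℝ := fun x => ⨆ n, ll n x with hLdef
  have hbddb : ∀ x, BddBelow (Set.range fun n => uu n x) := by
    intro x
    refine ⟨-C, ?_⟩
    rintro _ ⟨n, rfl⟩
    exact (abs_le.1 (hu_bd n x)).1
  have hbdda : ∀ x, BddAbove (Set.range fun n => ll n x) := by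
    intro x
    refine ⟨C, ?_⟩
    rintro _ ⟨n, rfl⟩
    exact (abs_le.1 (hl_bd n x)).2
  have hUm : Measurable U := Measurable.iInf fun n => hu_meas n
  have hLm : Measurable L := Measurable.iSup fun n => hl_meas n
  have hU_le : ∀ n x, U x ≤ uu n x := fun n x => ciInf_le (hbddb x) n
  have hL_ge : ∀ n x, ll n x ≤ L x := fun n x => le_ciSup (hbdda x) n
  have hU_out : ∀ x, x ∉ (I : Set (ι → ℝ)) → U x = 0 := by
    intro x hx
    simp only [hUdef]
    rw [show (fun n => uu n x) = fun _ : ℕ => (0:ℝ) from funext fun n => hu_out n x hx]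
    exact ciInf_const
  have hL_out : ∀ x, x ∉ (I : Set (ι → ℝ)) → L x = 0 := by
    intro x hx
    simp only [hLdef]
    rw [show (fun n => ll n x) = fun _ : ℕ => (0:ℝ) from funext fun n => hl_out n x hx]
    exact ciSup_const
  have hfU : ∀ x ∈ (I : Set (ι → ℝ)), f x ≤ U x := fun x hx =>
    le_ciInf fun n => hu_ge n x hx
  have hLf : ∀ x ∈ (I : Set (ι → ℝ)), L x ≤ f x := fun x hx =>
    ciSup_le fun n => hl_le n x hx
  have hLU : ∀ x, L x ≤ U x := by
    intro x
    by_cases hx : x ∈ (I : Set (ι → ℝ))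
    · exact (hLf x hx).trans (hfU x hx)
    · rw [hL_out x hx, hU_out x hx]
  have hU_bd : ∀ x, |U x| ≤ C := by
    intro x
    rw [abs_le]
    refine ⟨le_ciInf fun n => (abs_le.1 (hu_bd n x)).1, (hU_le 0 x).trans (abs_le.1 (hu_bd 0 x)).2⟩
  have hL_bd : ∀ x, |L x| ≤ C := by
    intro x
    rw [abs_le]
    refine ⟨((abs_le.1 (hl_bd 0 x)).1).trans (hL_ge 0 x), ciSup_le fun n => (abs_le.1 (hl_bd n x)).2⟩
  have hdom : MeasureTheory.Integrable (Set.indicator (I : Set (ι → ℝ)) fun _ => C) volume := by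
    rw [MeasureTheory.integrable_indicator_iff I.measurableSet_coe]
    exact MeasureTheory.integrableOn_const (I.measure_coe_lt_top volume).ne
  have hUint : MeasureTheory.Integrable U volume := by
    refine hdom.mono' hUm.aestronglyMeasurable (MeasureTheory.ae_of_all _ fun x => ?_)
    by_cases hx : x ∈ (I : Set (ι → ℝ))
    · rw [Set.indicator_of_mem hx, Real.norm_eq_abs]
      exact hU_bd x
    · rw [Set.indicator_of_notMem hx, hU_out x hx]
      simp
  have hLint : MeasureTheory.Integrable L volume := by
    refine hdom.mono' hLm.aestronglyMeasurable (MeasureTheory.ae_of_all _ fun x => ?_)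
    by_cases hx : x ∈ (I : Set (ι → ℝ))
    · rw [Set.indicator_of_mem hx, Real.norm_eq_abs]
      exact hL_bd x
    · rw [Set.indicator_of_notMem hx, hL_out x hx]
      simp
  have hIUy : ∀ n : ℕ, |(∫ x, U x) - y| ≤ 1 / (n + 1) := by
    intro n
    have h1 : (∫ x, U x) ≤ ∫ x, uu n x :=
      MeasureTheory.integral_mono hUint (hu_int n) fun x => hU_le n x
    have h2 : (∫ x, ll n x) ≤ ∫ x, L x :=
      MeasureTheory.integral_mono (hl_int n) hLint fun x => hL_ge n x
    have h3 : (∫ x, L x) ≤ ∫ x, U x := MeasureTheory.integral_mono hLint hUint hLU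
    have h4 := hu_le n
    have h5 := hl_ge n
    rw [abs_le]
    constructor <;> linarith
  have hILy : ∀ n : ℕ, |(∫ x, L x) - y| ≤ 1 / (n + 1) := by
    intro n
    have h2 : (∫ x, ll n x) ≤ ∫ x, L x :=
      MeasureTheory.integral_mono (hl_int n) hLint fun x => hL_ge n x
    have h3 : (∫ x, L x) ≤ ∫ x, U x := MeasureTheory.integral_mono hLint hUint hLU
    have h1 : (∫ x, U x) ≤ ∫ x, uu n x :=
      MeasureTheory.integral_mono hUint (hu_int n) fun x => hU_le n x
    have h4 := hu_le n
    have h5 := hl_ge n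
    rw [abs_le]
    constructor <;> linarith
  have habs_zero : ∀ z : ℝ, (∀ n : ℕ, |z| ≤ 1 / (n + 1)) → z = 0 := by
    intro z hz
    by_contra h
    obtain ⟨n, hn⟩ := exists_nat_one_div_lt (abs_pos.2 h)
    exact absurd (hz n) (by push_neg; exact_mod_cast hn)
  have hIU : (∫ x, U x) = y := by
    have := habs_zero _ fun n => hIUy n
    linarith [this]
  have hIL : (∫ x, L x) = y := by
    have := habs_zero _ fun n => hILy n
    linarith [this]
  have hdiff : (∫ x, (U x - L x)) = 0 := by
    rw [MeasureTheory.integral_sub hUint hLint, hIU, hIL, sub_self]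
  have hae : (fun x => U x - L x) =ᵐ[volume] 0 := by
    rw [← MeasureTheory.integral_eq_zero_iff_of_nonneg (fun x => sub_nonneg.2 (hLU x))
      (hUint.sub hLint)]
    exact hdiff
  set fI : (ι → ℝ) → ℝ := Set.indicator (I : Set (ι → ℝ)) f with hfIdef
  have hsq : ∀ x, L x ≤ fI x ∧ fI x ≤ U x := by
    intro x
    by_cases hx : x ∈ (I : Set (ι → ℝ))
    · rw [hfIdef, Set.indicator_of_mem hx]
      exact ⟨hLf x hx, hfU x hx⟩
    · rw [hfIdef, Set.indicator_of_notMem hx, hL_out x hx, hU_out x hx]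
      exact ⟨le_refl _, le_refl _⟩
  have hfIae : fI =ᵐ[volume] U := by
    filter_upwards [hae] with x hx
    have h1 : U x - L x = 0 := hx
    have h2 := hsq x
    have : L x = U x := by linarith
    linarith [h2.1, h2.2]
  have hfIint : MeasureTheory.Integrable fI volume := hUint.congr hfIae.symm
  have hfIval : (∫ x, fI x) = y := by
    rw [MeasureTheory.integral_congr_ae hfIae, hIU]
  constructor
  · exact (MeasureTheory.integrable_indicator_iff I.measurableSet_coe).1 hfIint
  · rw [← MeasureTheory.integral_indicator I.measurableSet_coe]
    exact hfIval

end RiemannDCT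

theorem stmt11 (f : ℕ → ℝ → ℝ) (y : ℕ → ℝ)
    (hf : ∀ n, HasRiemannIntegralOn01 (f n) (y n))
    (g : ℝ → ℝ) (hg : RiemannIntegrableOn01 g)
    (hbound : ∀ n, ∀ x ∈ Set.Icc (0:ℝ) 1, |f n x| ≤ g x)
    (F : ℝ → ℝ)
    (hconv : ∀ x ∈ Set.Icc (0:ℝ) 1, Tendsto (fun n => f n x) atTop (𝓝 (F x)))
    (yF : ℝ) (hF : HasRiemannIntegralOn01 F yF) :
    Tendsto y atTop (𝓝 yF) := by
  classical
  have hkf : ∀ n, MeasureTheory.IntegrableOn (fun x : Fin 1 → ℝ => f n (x 0))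
      (↑unitBox : Set (Fin 1 → ℝ)) volume ∧
      (∫ x in (↑unitBox : Set (Fin 1 → ℝ)), f n (x 0)) = y n :=
    fun n => RiemannDCT.key (hf n)
  have hkF : MeasureTheory.IntegrableOn (fun x : Fin 1 → ℝ => F (x 0))
      (↑unitBox : Set (Fin 1 → ℝ)) volume ∧
      (∫ x in (↑unitBox : Set (Fin 1 → ℝ)), F (x 0)) = yF := RiemannDCT.key hF
  obtain ⟨yg, hyg⟩ := hg
  have hkg : MeasureTheory.IntegrableOn (fun x : Fin 1 → ℝ => g (x 0))
      (↑unitBox : Set (Fin 1 → ℝ)) volume ∧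
      (∫ x in (↑unitBox : Set (Fin 1 → ℝ)), g (x 0)) = yg := RiemannDCT.key hyg
  have hmem : ∀ x : Fin 1 → ℝ, x ∈ (↑unitBox : Set (Fin 1 → ℝ)) → x 0 ∈ Set.Icc (0:ℝ) 1 := by
    intro x hx
    have h0 : x 0 ∈ Set.Ioc (unitBox.lower 0) (unitBox.upper 0) := hx 0
    exact ⟨le_of_lt h0.1, h0.2⟩
  have hmain := MeasureTheory.tendsto_integral_of_dominated_convergence
      (μ := volume.restrict (↑unitBox : Set (Fin 1 → ℝ)))
      (F := fun n (x : Fin 1 → ℝ) => f n (x 0)) (f := fun x : Fin 1 → ℝ => F (x 0))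
      (fun x : Fin 1 → ℝ => g (x 0))
      (fun n => ((hkf n).1).aestronglyMeasurable)
      hkg.1
      (fun n => (MeasureTheory.ae_restrict_iff' unitBox.measurableSet_coe).2
        (MeasureTheory.ae_of_all _ fun x hx => by
          rw [Real.norm_eq_abs]; exact hbound n (x 0) (hmem x hx)))
      ((MeasureTheory.ae_restrict_iff' unitBox.measurableSet_coe).2
        (MeasureTheory.ae_of_all _ fun x hx => hconv (x 0) (hmem x hx)))
  have heq : (fun n => ∫ x in (↑unitBox : Set (Fin 1 → ℝ)), f n (x 0)) = y :=
    funext fun n => (hkf n).2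
  rw [heq, hkF.2] at hmain
  exact hmain

end RiemannDCTAux
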